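/- Let a and b be positive real algebraic numbers with a ≠ b, a ≠ 1, b ≠ 1. Suppose the minimal polynomials of a and b over ℚ are distinct, and that b is an algebraic integer (its minimal polynomial with integer coefficients is monic). Then for every additive subgroup G of ℝ² containing (1,1) that is invariant under A = [[a,0],[0,b]] (i.e. {vA : v ∈ G} = G), there exists a nonzero integer n such that the map (g,h) ↦ (g, bⁿ·h) maps G onto G; in particular I(G) strictly contains { Aᵐ : m ∈ ℤ }. -/

import Mathlib

open Polynomial

/-- For an additive subgroup `G` of `ℝ²` (elements viewed as row vectors), `IG G` is the
set of invertible real `2 × 2` matrices `B` of the form `[[a,0],[0,b]]` or `[[0,a],[b,0]]`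
with `a > 0`, `b > 0`, such that right multiplication by `B` maps `G` onto `G`. -/
def IG (G : AddSubgroup (Fin 2 → ℝ)) : Set (Matrix (Fin 2) (Fin 2) ℝ) :=
  {B | IsUnit B ∧
    (∃ a b : ℝ, 0 < a ∧ 0 < b ∧
      (B = Matrix.of ![![a, 0], ![0, b]] ∨ B = Matrix.of ![![0, a], ![b, 0]])) ∧
    (fun v => Matrix.vecMul v B) '' (G : Set (Fin 2 → ℝ)) = (G : Set (Fin 2 → ℝ))}

private lemma vecMul_diag (x y : ℝ) (v : Fin 2 → ℝ) :
    Matrix.vecMul v (Matrix.of ![![x, 0], ![0, y]]) = ![v 0 * x, v 1 * y] := by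
  funext i
  fin_cases i <;>
    simp [Matrix.vecMul, dotProduct, Fin.sum_univ_two]

private lemma diag_mul (x y z w : ℝ) :
    Matrix.of ![![x, 0], ![0, y]] * Matrix.of ![![z, 0], ![0, w]]
      = Matrix.of ![![x * z, 0], ![0, y * w]] := by
  ext i j
  fin_cases i <;> fin_cases j <;>
    simp [Matrix.mul_apply, Fin.sum_univ_two]

private lemma diag_zpow (x y : ℝ) (hx : x ≠ 0) (hy : y ≠ 0) (m : ℤ) :
    (Matrix.of ![![x, 0], ![0, y]]) ^ m = Matrix.of ![![x ^ m, 0], ![0, y ^ m]] := by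
  have hnat : ∀ k : ℕ, (Matrix.of ![![x, 0], ![0, y]]) ^ k
      = Matrix.of ![![x ^ k, 0], ![0, y ^ k]] := by
    intro k
    induction k with
    | zero =>
      ext i j
      fin_cases i <;> fin_cases j <;> simp [Matrix.one_apply]
    | succ k ih => rw [pow_succ, ih, diag_mul, ← pow_succ, ← pow_succ]
  cases m with
  | ofNat k => simpa using hnat k
  | negSucc k =>
    rw [zpow_negSucc, hnat (k + 1)]
    refine Matrix.inv_eq_right_inv ?_
    have h1 : x ^ Int.negSucc k = (x ^ (k + 1))⁻¹ := zpow_negSucc x k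
    have h2 : y ^ Int.negSucc k = (y ^ (k + 1))⁻¹ := zpow_negSucc y k
    rw [diag_mul, h1, h2]
    ext i j
    fin_cases i <;> fin_cases j <;>
      simp [Matrix.one_apply, mul_inv_cancel₀ (pow_ne_zero (k + 1) hx),
        mul_inv_cancel₀ (pow_ne_zero (k + 1) hy)]

private lemma mem_zpow_mul {a b : ℝ} (ha : a ≠ 0) (hb : b ≠ 0)
    {G : AddSubgroup (Fin 2 → ℝ)}
    (hinv : (fun v => Matrix.vecMul v (Matrix.of ![![a, 0], ![0, b]])) ''
        (G : Set (Fin 2 → ℝ)) = (G : Set (Fin 2 → ℝ)))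
    (m : ℤ) {v : Fin 2 → ℝ} (hv : v ∈ G) : ![v 0 * a ^ m, v 1 * b ^ m] ∈ G := by
  have fwd : ∀ w ∈ G, ![w 0 * a, w 1 * b] ∈ G := by
    intro w hw
    have hmem : Matrix.vecMul w (Matrix.of ![![a, 0], ![0, b]])
        ∈ (G : Set (Fin 2 → ℝ)) := by
      rw [← hinv]; exact ⟨w, hw, rfl⟩
    rwa [vecMul_diag] at hmem
  have bwd : ∀ w ∈ G, ![w 0 * a⁻¹, w 1 * b⁻¹] ∈ G := by
    intro w hw
    have hw' : w ∈ (fun v => Matrix.vecMul v (Matrix.of ![![a, 0], ![0, b]])) ''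
        (G : Set (Fin 2 → ℝ)) := by rw [hinv]; exact hw
    obtain ⟨u, hu, huw⟩ := hw'
    replace huw : Matrix.vecMul u (Matrix.of ![![a, 0], ![0, b]]) = w := huw
    rw [vecMul_diag] at huw
    have h0 : u 0 * a = w 0 := by rw [← huw]; simp
    have h1 : u 1 * b = w 1 := by rw [← huw]; simp
    have hueq : u = ![w 0 * a⁻¹, w 1 * b⁻¹] := by
      funext i
      fin_cases i
      · simp only [Fin.zero_eta, Matrix.cons_val_zero]
        rw [← h0]; simp [ha]
      · simp only [Fin.mk_one, Matrix.cons_val_one, Matrix.head_cons]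
        rw [← h1]; simp [hb]
    rw [← hueq]; exact hu
  have fwdn : ∀ k : ℕ, ∀ w ∈ G, ![w 0 * a ^ k, w 1 * b ^ k] ∈ G := by
    intro k
    induction k with
    | zero =>
      intro w hw
      have heq : (![w 0 * a ^ 0, w 1 * b ^ 0] : Fin 2 → ℝ) = w := by
        funext i; fin_cases i <;> simp
      rwa [heq]
    | succ k ih =>
      intro w hw
      have h2 := fwd _ (ih w hw)
      simp only [Matrix.cons_val_zero, Matrix.cons_val_one, Matrix.head_cons] at h2
      have heq : (![w 0 * a ^ k * a, w 1 * b ^ k * b] : Fin 2 → ℝ)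
          = ![w 0 * a ^ (k + 1), w 1 * b ^ (k + 1)] := by
        funext i; fin_cases i <;> simp [pow_succ] <;> ring
      rwa [heq] at h2
  have bwdn : ∀ k : ℕ, ∀ w ∈ G, ![w 0 * (a ^ k)⁻¹, w 1 * (b ^ k)⁻¹] ∈ G := by
    intro k
    induction k with
    | zero =>
      intro w hw
      have heq : (![w 0 * ((a : ℝ) ^ 0)⁻¹, w 1 * ((b : ℝ) ^ 0)⁻¹] : Fin 2 → ℝ) = w := by
        funext i; fin_cases i <;> simp
      rwa [heq]
    | succ k ih =>
      intro w hw
      have h2 := bwd _ (ih w hw)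
      simp only [Matrix.cons_val_zero, Matrix.cons_val_one, Matrix.head_cons] at h2
      have heq : (![w 0 * (a ^ k)⁻¹ * a⁻¹, w 1 * (b ^ k)⁻¹ * b⁻¹] : Fin 2 → ℝ)
          = ![w 0 * (a ^ (k + 1))⁻¹, w 1 * (b ^ (k + 1))⁻¹] := by
        funext i; fin_cases i <;> simp [pow_succ, mul_inv] <;> ring
      rwa [heq] at h2
  cases m with
  | ofNat k =>
    have h2 := fwdn k v hv
    have heq : (![v 0 * a ^ k, v 1 * b ^ k] : Fin 2 → ℝ)
        = ![v 0 * a ^ (Int.ofNat k), v 1 * b ^ (Int.ofNat k)] := by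
      funext i; fin_cases i <;> simp
    rwa [heq] at h2
  | negSucc k =>
    have := bwdn (k + 1) v hv
    have heq : (![v 0 * (a ^ (k + 1))⁻¹, v 1 * (b ^ (k + 1))⁻¹] : Fin 2 → ℝ)
        = ![v 0 * a ^ Int.negSucc k, v 1 * b ^ Int.negSucc k] := by
      funext i; fin_cases i <;> simp [zpow_negSucc]
    rwa [heq] at this

private lemma mem_poly {a b : ℝ} (ha : a ≠ 0) (hb : b ≠ 0)
    {G : AddSubgroup (Fin 2 → ℝ)}
    (hinv : (fun v => Matrix.vecMul v (Matrix.of ![![a, 0], ![0, b]])) ''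
        (G : Set (Fin 2 → ℝ)) = (G : Set (Fin 2 → ℝ)))
    (P : Polynomial ℤ) (m : ℤ) {v : Fin 2 → ℝ} (hv : v ∈ G) :
    ![(aeval a P) * a ^ m * v 0, (aeval b P) * b ^ m * v 1] ∈ G := by
  induction P using Polynomial.induction_on' with
  | add p q hp hq =>
    have h2 := AddSubgroup.add_mem G hp hq
    have heq : (![(aeval a p) * a ^ m * v 0, (aeval b p) * b ^ m * v 1]
        + ![(aeval a q) * a ^ m * v 0, (aeval b q) * b ^ m * v 1] : Fin 2 → ℝ)
        = ![(aeval a (p + q)) * a ^ m * v 0, (aeval b (p + q)) * b ^ m * v 1] := by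
      funext i; fin_cases i <;> simp [map_add] <;> ring
    rwa [heq] at h2
  | monomial k r =>
    have hm := mem_zpow_mul ha hb hinv ((k : ℤ) + m) hv
    have h2 := AddSubgroup.zsmul_mem G hm r
    have heq : r • (![v 0 * a ^ ((k : ℤ) + m), v 1 * b ^ ((k : ℤ) + m)] : Fin 2 → ℝ)
        = ![(aeval a (monomial k r)) * a ^ m * v 0,
            (aeval b (monomial k r)) * b ^ m * v 1] := by
      funext i
      fin_cases i <;>
        simp [aeval_monomial, zpow_add₀ ha, zpow_add₀ hb, zpow_natCast,
          zsmul_eq_mul] <;> ring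
    rwa [heq] at h2

private lemma exists_int_eq {c : ℝ} (hc : c ≠ 0) (hcint : IsIntegral ℤ c) :
    ∃ (N : ℤ) (u : Polynomial ℤ), N ≠ 0 ∧ (N : ℝ) = c * aeval c u := by
  have hqmonic : (minpoly ℤ c).Monic := minpoly.monic hcint
  have hqa : aeval c (minpoly ℤ c) = 0 := minpoly.aeval ℤ c
  have hkey : (X : Polynomial ℤ) * (minpoly ℤ c).divX + C ((minpoly ℤ c).coeff 0)
      = minpoly ℤ c := X_mul_divX_add _
  have heval : c * aeval c (minpoly ℤ c).divX + (((minpoly ℤ c).coeff 0 : ℤ) : ℝ) = 0 := by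
    have := congrArg (aeval c) hkey
    simpa [hqa] using this
  refine ⟨(minpoly ℤ c).coeff 0, -(minpoly ℤ c).divX, ?_, ?_⟩
  · intro hN0
    have hdeg : 1 ≤ (minpoly ℤ c).natDegree := by
      rcases Nat.eq_zero_or_pos (minpoly ℤ c).natDegree with h0 | h1
      · exfalso
        have h2 : minpoly ℤ c = C ((minpoly ℤ c).coeff 0) := eq_C_of_natDegree_eq_zero h0
        rw [hN0] at h2
        have h3 : minpoly ℤ c = 0 := by simpa using h2
        exact hqmonic.ne_zero h3
      · exact h1
    have hdivmonic : (minpoly ℤ c).divX.Monic := by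
      rw [Polynomial.Monic, Polynomial.leadingCoeff,
        natDegree_divX_eq_natDegree_tsub_one, coeff_divX,
        Nat.sub_add_cancel hdeg]
      exact hqmonic
    have hdiv0 : aeval c (minpoly ℤ c).divX = 0 := by
      rw [hN0] at heval
      push_cast at heval
      have h2 : c * aeval c (minpoly ℤ c).divX = 0 := by linarith
      rcases mul_eq_zero.mp h2 with h | h
      · exact absurd h hc
      · exact h
    have hmin := minpoly.min ℤ c hdivmonic hdiv0
    have hlt := degree_divX_lt hqmonic.ne_zero
    exact absurd hmin (not_le_of_gt hlt)
  · have h4 : (((minpoly ℤ c).coeff 0 : ℤ) : ℝ) = -(c * aeval c (minpoly ℤ c).divX) := by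
      linarith
    rw [h4, map_neg]
    ring

private lemma exists_pow_diff {b : ℝ} (hbint : IsIntegral ℤ b)
    (N : ℤ) (hN : N ≠ 0) :
    ∃ (m n : ℕ) (g : Polynomial ℤ), 0 < n ∧
      (b : ℝ) ^ m - b ^ (m + n) = (N : ℝ) * aeval b g := by
  set f := minpoly ℤ b with hf
  have hfmonic : f.Monic := minpoly.monic hbint
  have hfa : aeval b f = 0 := minpoly.aeval ℤ b
  set d := f.natDegree with hd
  set M := N.natAbs with hM
  haveI : NeZero M := ⟨Int.natAbs_ne_zero.mpr hN⟩
  -- pigeonhole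
  obtain ⟨m₁, m₂, hne, hFeq⟩ := Finite.exists_ne_map_eq_of_infinite
    (fun (k : ℕ) (i : Fin d) => (((X ^ k %ₘ f).coeff (i : ℕ) : ℤ) : ZMod M))
  -- wlog m₁ < m₂
  have key : ∀ m₁ m₂ : ℕ, m₁ < m₂ →
      ((fun (k : ℕ) (i : Fin d) => (((X ^ k %ₘ f).coeff (i : ℕ) : ℤ) : ZMod M)) m₁
        = (fun (k : ℕ) (i : Fin d) => (((X ^ k %ₘ f).coeff (i : ℕ) : ℤ) : ZMod M)) m₂) →
      ∃ (m n : ℕ) (g : Polynomial ℤ), 0 < n ∧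
        (b : ℝ) ^ m - b ^ (m + n) = (N : ℝ) * aeval b g := by
    intro m₁ m₂ hlt heq
    refine ⟨m₁, m₂ - m₁, ?_⟩
    have hcd : ∀ i : ℕ, N ∣ (X ^ m₁ %ₘ f - X ^ m₂ %ₘ f).coeff i := by
      intro i
      rw [coeff_sub]
      rcases lt_or_ge i d with hi | hi
      · have := congrFun heq ⟨i, hi⟩
        simp only at this
        have h2 : (((X ^ m₁ %ₘ f).coeff i - (X ^ m₂ %ₘ f).coeff i : ℤ) : ZMod M) = 0 := by
          push_cast
          rw [this]; ring
        have h3 : (M : ℤ) ∣ (X ^ m₁ %ₘ f).coeff i - (X ^ m₂ %ₘ f).coeff i :=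
          (ZMod.intCast_zmod_eq_zero_iff_dvd _ M).mp h2
        rw [hM] at h3
        exact Int.natAbs_dvd.mp h3
      · have hdeg : ∀ k : ℕ, (X ^ k %ₘ f).coeff i = 0 := by
          intro k
          apply coeff_eq_zero_of_degree_lt
          calc (X ^ k %ₘ f).degree < f.degree := degree_modByMonic_lt _ hfmonic
            _ ≤ (i : WithBot ℕ) := by
              rw [degree_eq_natDegree hfmonic.ne_zero]
              exact_mod_cast hi
        simp [hdeg]
    obtain ⟨g, hg⟩ := (C_dvd_iff_dvd_coeff N _).mpr hcd
    refine ⟨g, by omega, ?_⟩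
    have hev : ∀ k : ℕ, aeval b (X ^ k %ₘ f) = b ^ k := by
      intro k
      have := congrArg (aeval b) (modByMonic_add_div (X ^ k : Polynomial ℤ) f)
      simpa [hfa] using this
    have := congrArg (aeval b) hg
    rw [map_sub, hev, hev, map_mul, aeval_C] at this
    rw [Nat.add_sub_cancel' (le_of_lt hlt)]
    simpa using this
  rcases lt_or_gt_of_ne hne with h | h
  · exact key _ _ h hFeq
  · exact key _ _ h hFeq.symm

private lemma image_eq_of_mem {G : AddSubgroup (Fin 2 → ℝ)} {x y : ℝ}
    (hx : x ≠ 0) (hy : y ≠ 0)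
    (h1 : ∀ v ∈ G, ![v 0 * x, v 1 * y] ∈ G)
    (h2 : ∀ v ∈ G, ![v 0 * x⁻¹, v 1 * y⁻¹] ∈ G) :
    (fun v : Fin 2 → ℝ => ![v 0 * x, v 1 * y]) '' (G : Set (Fin 2 → ℝ))
      = (G : Set (Fin 2 → ℝ)) := by
  apply Set.eq_of_subset_of_subset
  · rintro z ⟨v, hv, rfl⟩
    exact h1 v hv
  · intro z hz
    refine ⟨![z 0 * x⁻¹, z 1 * y⁻¹], h2 z hz, ?_⟩
    funext i
    fin_cases i <;> simp <;> field_simp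

theorem stmt7 (a b : ℝ) (ha : 0 < a) (hb : 0 < b)
    (halg : IsAlgebraic ℚ a) (hbalg : IsAlgebraic ℚ b)
    (hab : a ≠ b) (ha1 : a ≠ 1) (hb1 : b ≠ 1)
    (hmin : minpoly ℚ a ≠ minpoly ℚ b) (hbint : IsIntegral ℤ b)
    (G : AddSubgroup (Fin 2 → ℝ)) (h11 : (![1, 1] : Fin 2 → ℝ) ∈ G)
    (hinv : (fun v => Matrix.vecMul v (Matrix.of ![![a, 0], ![0, b]])) ''
        (G : Set (Fin 2 → ℝ)) = (G : Set (Fin 2 → ℝ))) :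
    (∃ n : ℤ, n ≠ 0 ∧
      (fun v : Fin 2 → ℝ => ![v 0, b ^ n * v 1]) ''
        (G : Set (Fin 2 → ℝ)) = (G : Set (Fin 2 → ℝ))) ∧
    {B : Matrix (Fin 2) (Fin 2) ℝ | ∃ m : ℤ, B = (Matrix.of ![![a, 0], ![0, b]]) ^ m} ⊂
      IG G := by
  have ha0 : a ≠ 0 := ne_of_gt ha
  have hb0 : b ≠ 0 := ne_of_gt hb
  have haQ : IsIntegral ℚ a := halg.isIntegral
  have hbQ : IsIntegral ℚ b := hbalg.isIntegral
  -- the minimal polynomial of `a` does not vanish at `b`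
  have hpb : aeval b (minpoly ℚ a) ≠ 0 := by
    intro h0
    have hdvd := minpoly.dvd ℚ b h0
    have hirr := minpoly.irreducible haQ
    obtain ⟨cf, hcf⟩ := hdvd
    rcases hirr.isUnit_or_isUnit hcf with hu | hu
    · exact (minpoly.not_isUnit ℚ b) hu
    · have hassoc : Associated (minpoly ℚ b) (minpoly ℚ a) :=
        ⟨hu.unit, by rw [IsUnit.unit_spec]; exact hcf.symm⟩
      exact hmin ((eq_of_monic_of_associated (minpoly.monic hbQ)
        (minpoly.monic haQ) hassoc).symm)
  -- clear denominators: an integer polynomial vanishing at `a` but not at `b`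
  obtain ⟨D, hD⟩ := IsLocalization.integerNormalization_map_to_map
    (nonZeroDivisors ℤ) (minpoly ℚ a)
  set P₀ : Polynomial ℤ :=
    IsLocalization.integerNormalization (nonZeroDivisors ℤ) (minpoly ℚ a) with hP₀
  have hD0 : (D : ℤ) ≠ 0 := nonZeroDivisors.coe_ne_zero D
  have haevP₀ : ∀ x : ℝ, aeval x P₀ = (D : ℤ) • aeval x (minpoly ℚ a) := by
    intro x
    have h1 : aeval x P₀ = aeval x (P₀.map (algebraMap ℤ ℚ)) :=
      (aeval_map_algebraMap ℚ x P₀).symm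
    rw [h1, hD]
    exact map_zsmul (aeval x : Polynomial ℚ →ₐ[ℚ] ℝ).toLinearMap.toAddMonoidHom
      (D : ℤ) (minpoly ℚ a)
  have hP₀a : aeval a P₀ = 0 := by
    rw [haevP₀, minpoly.aeval, smul_zero]
  set c : ℝ := aeval b P₀ with hc
  have hc0 : c ≠ 0 := by
    rw [hc, haevP₀]
    simp only [zsmul_eq_mul]
    exact mul_ne_zero (by exact_mod_cast hD0) hpb
  -- c is an algebraic integer
  have hcint : IsIntegral ℤ c :=
    IsIntegral.of_mem_of_fg (Algebra.adjoin ℤ {b}) hbint.fg_adjoin_singleton _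
      (aeval_mem_adjoin_singleton ℤ b)
  obtain ⟨N, u, hN0, hNcu⟩ := exists_int_eq hc0 hcint
  obtain ⟨m, n, g, hn, hbg⟩ := exists_pow_diff hbint N hN0
  -- the combined polynomial
  set U : Polynomial ℤ := u.comp P₀ * g with hU
  have hUval : (b : ℝ) ^ m - b ^ (m + n) = c * aeval b U := by
    rw [hbg, hNcu, hU, map_mul, aeval_comp, ← hc]
    ring
  -- key zpow identities
  have hzpow : ∀ k : ℕ, b ^ (k : ℤ) = b ^ k := fun k => zpow_natCast b k
  have h₁ : b ^ (-(n : ℤ)) - 1 = c * aeval b U * b ^ (-(m : ℤ) - n) := by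
    have hbmn : b ^ ((m : ℤ) + n) ≠ 0 := zpow_ne_zero _ hb0
    have expand : b ^ (-(n : ℤ)) - 1
        = (b ^ (m : ℤ) - b ^ ((m : ℤ) + n)) * b ^ (-(m : ℤ) - n) := by
      rw [sub_mul, ← zpow_add₀ hb0, ← zpow_add₀ hb0,
        show (m : ℤ) + (-(m : ℤ) - (n : ℤ)) = -(n : ℤ) by ring,
        show ((m : ℤ) + (n : ℤ)) + (-(m : ℤ) - (n : ℤ)) = 0 by ring, zpow_zero]
    rw [expand]
    have : b ^ ((m : ℤ)) - b ^ ((m : ℤ) + n) = c * aeval b U := by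
      rw [hzpow m]
      rw [show ((m : ℤ) + n) = ((m + n : ℕ) : ℤ) by push_cast; ring, hzpow]
      exact hUval
    rw [this]
  have h₂ : b ^ (n : ℤ) - 1 = c * aeval b (-U) * b ^ (-(m : ℤ)) := by
    have expand : b ^ (n : ℤ) - 1
        = (b ^ ((m : ℤ) + n) - b ^ (m : ℤ)) * b ^ (-(m : ℤ)) := by
      rw [sub_mul, ← zpow_add₀ hb0, ← zpow_add₀ hb0,
        show ((m : ℤ) + (n : ℤ)) + -(m : ℤ) = (n : ℤ) by ring,
        show (m : ℤ) + -(m : ℤ) = 0 by ring, zpow_zero]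
    rw [expand]
    have : b ^ ((m : ℤ) + n) - b ^ ((m : ℤ)) = c * aeval b (-U) := by
      rw [hzpow m, show ((m : ℤ) + n) = ((m + n : ℕ) : ℤ) by push_cast; ring, hzpow,
        map_neg]
      linarith [hUval]
    rw [this]
  -- membership: for every q, j, v
  have hK : ∀ (q : Polynomial ℤ) (j : ℤ), ∀ v ∈ G,
      ![0, c * aeval b q * b ^ j * v 1] ∈ G := by
    intro q j v hv
    have h2 := mem_poly ha0 hb0 hinv (P₀ * q) j hv
    have heq : (![(aeval a (P₀ * q)) * a ^ j * v 0, (aeval b (P₀ * q)) * b ^ j * v 1]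
        : Fin 2 → ℝ) = ![0, c * aeval b q * b ^ j * v 1] := by
      funext i
      fin_cases i
      · simp [map_mul, hP₀a]
      · simp only [Fin.mk_one, Matrix.cons_val_one, Matrix.head_cons, map_mul, ← hc]
        try ring
    rwa [heq] at h2
  have hfwd : ∀ v ∈ G, ![v 0, b ^ (n : ℤ) * v 1] ∈ G := by
    intro v hv
    have h2 := hK (-U) (-(m : ℤ)) v hv
    have h3 := AddSubgroup.add_mem G hv h2
    have heq : (v + ![0, c * aeval b (-U) * b ^ (-(m : ℤ)) * v 1] : Fin 2 → ℝ)
        = ![v 0, b ^ (n : ℤ) * v 1] := by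
      funext i
      fin_cases i
      · simp
      · have hsc : c * aeval b (-U) * b ^ (-(m : ℤ)) = b ^ (n : ℤ) - 1 := h₂.symm
        simp only [Pi.add_apply, Fin.mk_one, Matrix.cons_val_one, Matrix.head_cons,
          Matrix.cons_val_zero]
        rw [hsc]
        ring
    rwa [heq] at h3
  have hbwd : ∀ v ∈ G, ![v 0, b ^ (-(n : ℤ)) * v 1] ∈ G := by
    intro v hv
    have h2 := hK U (-(m : ℤ) - n) v hv
    have h3 := AddSubgroup.add_mem G hv h2
    have heq : (v + ![0, c * aeval b U * b ^ (-(m : ℤ) - n) * v 1] : Fin 2 → ℝ)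
        = ![v 0, b ^ (-(n : ℤ)) * v 1] := by
      funext i
      fin_cases i
      · simp
      · have hsc : c * aeval b U * b ^ (-(m : ℤ) - n) = b ^ (-(n : ℤ)) - 1 := h₁.symm
        simp only [Pi.add_apply, Fin.mk_one, Matrix.cons_val_one, Matrix.head_cons,
          Matrix.cons_val_zero]
        rw [hsc]
        ring
    rwa [heq] at h3
  have hn0 : (n : ℤ) ≠ 0 := by exact_mod_cast hn.ne'
  -- the image equality for the map in the first conclusion
  have himg : (fun v : Fin 2 → ℝ => ![v 0, b ^ (n : ℤ) * v 1]) ''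
      (G : Set (Fin 2 → ℝ)) = (G : Set (Fin 2 → ℝ)) := by
    apply Set.eq_of_subset_of_subset
    · rintro z ⟨v, hv, rfl⟩
      exact hfwd v hv
    · intro z hz
      refine ⟨![z 0, b ^ (-(n : ℤ)) * z 1], hbwd z hz, ?_⟩
      funext i
      fin_cases i
      · simp
      · simp only [Matrix.cons_val_one, Matrix.head_cons, Matrix.cons_val_zero]
        rw [← mul_assoc, ← zpow_add₀ hb0]
        simp
  constructor
  · exact ⟨(n : ℤ), hn0, himg⟩
  -- second part
  have hAm : ∀ m' : ℤ, (Matrix.of ![![a, 0], ![0, b]]) ^ m'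
      = Matrix.of ![![a ^ m', 0], ![0, b ^ m']] := diag_zpow a b ha0 hb0
  have hsub : {B : Matrix (Fin 2) (Fin 2) ℝ |
      ∃ m' : ℤ, B = (Matrix.of ![![a, 0], ![0, b]]) ^ m'} ⊆ IG G := by
    rintro B ⟨m', rfl⟩
    rw [hAm m']
    refine ⟨?_, ⟨a ^ m', b ^ m', zpow_pos ha m', zpow_pos hb m', Or.inl rfl⟩, ?_⟩
    · rw [Matrix.isUnit_iff_isUnit_det]
      have hdet : (Matrix.of ![![a ^ m', 0], ![0, b ^ m']]).det = a ^ m' * b ^ m' := by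
        rw [show (Matrix.of ![![a ^ m', 0], ![0, b ^ m']])
          = !![a ^ m', 0; 0, b ^ m'] from rfl, Matrix.det_fin_two_of]
        ring
      rw [hdet]
      exact (mul_ne_zero (zpow_ne_zero _ ha0) (zpow_ne_zero _ hb0)).isUnit
    · have hfun : (fun v => Matrix.vecMul v (Matrix.of ![![a ^ m', 0], ![0, b ^ m']]))
          = fun v : Fin 2 → ℝ => ![v 0 * a ^ m', v 1 * b ^ m'] := by
        funext v; exact vecMul_diag _ _ v
      rw [hfun]
      apply image_eq_of_mem (zpow_ne_zero _ ha0) (zpow_ne_zero _ hb0)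
      · intro v hv; exact mem_zpow_mul ha0 hb0 hinv m' hv
      · intro v hv
        have := mem_zpow_mul ha0 hb0 hinv (-m') hv
        rwa [zpow_neg, zpow_neg] at this
  rw [Set.ssubset_iff_of_subset hsub]
  refine ⟨Matrix.of ![![(1 : ℝ), 0], ![0, b ^ (n : ℤ)]], ?_, ?_⟩
  · refine ⟨?_, ⟨1, b ^ (n : ℤ), one_pos, zpow_pos hb _, Or.inl rfl⟩, ?_⟩
    · rw [Matrix.isUnit_iff_isUnit_det]
      have hdet : (Matrix.of ![![(1 : ℝ), 0], ![0, b ^ (n : ℤ)]]).det = b ^ (n : ℤ) := by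
        rw [show (Matrix.of ![![(1 : ℝ), 0], ![0, b ^ (n : ℤ)]])
          = !![(1 : ℝ), 0; 0, b ^ (n : ℤ)] from rfl, Matrix.det_fin_two_of]
        ring
      rw [hdet]
      exact (zpow_ne_zero _ hb0).isUnit
    · have hfun : (fun v => Matrix.vecMul v (Matrix.of ![![(1 : ℝ), 0], ![0, b ^ (n : ℤ)]]))
          = fun v : Fin 2 → ℝ => ![v 0, b ^ (n : ℤ) * v 1] := by
        funext v
        rw [vecMul_diag]
        funext i
        fin_cases i <;> simp [mul_comm]
      rw [hfun, himg]
  · rintro ⟨m', hm'⟩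
    rw [hAm m'] at hm'
    have h00 : (1 : ℝ) = a ^ m' := by
      have := congrFun (congrFun (congrArg (fun M => (M : Matrix (Fin 2) (Fin 2) ℝ))
        hm') 0) 0
      simpa using this
    have h11' : b ^ (n : ℤ) = b ^ m' := by
      have := congrFun (congrFun (congrArg (fun M => (M : Matrix (Fin 2) (Fin 2) ℝ))
        hm') 1) 1
      simpa using this
    have hloga : Real.log a ≠ 0 := by
      intro h
      rcases Real.log_eq_zero.mp h with h' | h' | h'
      · exact ha0 h'
      · exact ha1 h'
      · linarith
    have hlogb : Real.log b ≠ 0 := by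
      intro h
      rcases Real.log_eq_zero.mp h with h' | h' | h'
      · exact hb0 h'
      · exact hb1 h'
      · linarith
    have hm'0 : m' = 0 := by
      have : (m' : ℝ) * Real.log a = 0 := by
        rw [← Real.log_zpow, ← h00, Real.log_one]
      rcases mul_eq_zero.mp this with h | h
      · exact_mod_cast h
      · exact absurd h hloga
    rw [hm'0] at h11'
    simp only [zpow_zero] at h11'
    have : ((n : ℤ) : ℝ) * Real.log b = 0 := by
      rw [← Real.log_zpow, h11', Real.log_one]
    rcases mul_eq_zero.mp this with h | h
    · have : (n : ℤ) = 0 := by exact_mod_cast h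
      exact hn.ne' (by exact_mod_cast this)
    · exact absurd h hlogb
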